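/- arXiv:math/0201037 — 2 statements merged into one kernel-verified Lean document; each statement's English description precedes it below -/
import Mathlib

section
/- Let L be an even lattice of finite rank with a nondegenerate positive definite symmetric integer-valued bilinear form ⟨·|·⟩, and let λ be an element of the dual lattice L°. Then the set Γ_λ = { β ∈ L | ⟨β−α | α+λ⟩ < 0 for all α ∈ L with α ≠ β and α ≠ −λ } is finite. -/
/-- Coercion of an integer vector to a rational vector. -/
def intVecCast {l : ℕ} (x : Fin l → ℤ) : Fin l → ℚ := fun i => (x i : ℚ)

lemma intVecCast_add {l : ℕ} (x y : Fin l → ℤ) :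
    intVecCast (x + y) = intVecCast x + intVecCast y := by
  funext j; simp [intVecCast]

lemma intVecCast_zsmul {l : ℕ} (t : ℤ) (x : Fin l → ℤ) :
    intVecCast (t • x) = (t : ℚ) • intVecCast x := by
  funext j; simp only [intVecCast, Pi.smul_apply, smul_eq_mul]; push_cast; ring

lemma intVecCast_single {l : ℕ} (i : Fin l) :
    intVecCast (Pi.single i 1 : Fin l → ℤ) = Pi.single i (1 : ℚ) := by
  funext j
  simp [intVecCast, Pi.single_apply, apply_ite (Int.cast : ℤ → ℚ)]

lemma intVecCast_inj {l : ℕ} {x y : Fin l → ℤ} (h : intVecCast x = intVecCast y) : x = y := by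
  funext j
  have := congrFun h j
  simpa [intVecCast] using this

/-- For an even lattice `L` of finite rank with a nondegenerate positive
definite symmetric integer-valued bilinear form and `λ ∈ L°`, the set
`Γ_λ = { β ∈ L | ⟨β−α|α+λ⟩ < 0 for all α ∈ L, α ≠ β, α ≠ −λ }` is finite. -/
theorem gamma_lambda_finite (l : ℕ)
    (B : (Fin l → ℚ) →ₗ[ℚ] (Fin l → ℚ) →ₗ[ℚ] ℚ)
    (hsymm : ∀ x y, B x y = B y x)
    (hpos : ∀ x, x ≠ 0 → 0 < B x x)
    (hint : ∀ x y : Fin l → ℤ, ∃ z : ℤ, B (intVecCast x) (intVecCast y) = z)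
    (heven : ∀ x : Fin l → ℤ, ∃ z : ℤ, B (intVecCast x) (intVecCast x) = 2 * z)
    (lam : Fin l → ℚ)
    (hlam : ∀ x : Fin l → ℤ, ∃ z : ℤ, B lam (intVecCast x) = z) :
    Set.Finite {β : Fin l → ℤ | ∀ α : Fin l → ℤ, α ≠ β → intVecCast α ≠ -lam →
      B (intVecCast β - intVecCast α) (intVecCast α + lam) < 0} := by
  classical
  set e : Fin l → (Fin l → ℚ) := fun i => Pi.single i (1 : ℚ) with he
  have he_ne : ∀ i, e i ≠ 0 := by
    intro i h
    have := congrFun h i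
    simp [he] at this
  have hecast : ∀ i, intVecCast (Pi.single i 1 : Fin l → ℤ) = e i := fun i => intVecCast_single i
  -- expansion of B in terms of the basis e
  have hexp : ∀ x y : Fin l → ℚ, B x y = ∑ i, x i * B (e i) y := by
    intro x y
    have hx : x = ∑ i, x i • e i := by
      funext j
      simp [he, Pi.single_apply]
    conv_lhs => rw [hx]
    simp [map_sum]
  -- choose integer values
  choose c hc using fun i => hint (Pi.single i 1) (Pi.single i 1)
  have hcpos : ∀ i, (0 : ℚ) < c i := by
    intro i
    have := hpos (e i) (he_ne i)
    rw [← hecast i] at this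
    rw [hc i] at this
    exact this
  choose d hd using fun i => hlam (Pi.single i 1)
  have hd' : ∀ i, B (e i) lam = d i := by
    intro i
    rw [← hecast i, hsymm]
    exact hd i
  choose z hz using fun (β : Fin l → ℤ) i => hint (Pi.single i 1) β
  have hz' : ∀ β i, B (e i) (intVecCast β) = z β i := by
    intro β i; rw [← hecast i]; exact hz β i
  -- The map Φ
  set Φ : (Fin l → ℤ) → (Fin l → ℚ) := fun β i => B (e i) (intVecCast β) + B (e i) lam with hΦ
  have hΦinj : Function.Injective Φ := by
    intro β β' h
    have h0 : ∀ i, B (e i) (intVecCast β - intVecCast β') = 0 := by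
      intro i
      have := congrFun h i
      simp only [hΦ] at this
      rw [map_sub]
      linarith
    have hv : B (intVecCast β - intVecCast β') (intVecCast β - intVecCast β') = 0 := by
      rw [hexp]
      simp [h0]
    have : intVecCast β - intVecCast β' = 0 := by
      by_contra hne
      exact absurd hv (ne_of_gt (hpos _ hne))
    exact intVecCast_inj (sub_eq_zero.mp this)
  -- the target finite set
  set S : Set (Fin l → ℚ) :=
    Set.pi Set.univ (fun i => (fun z : ℤ => (z : ℚ)) '' Set.Icc (-(2 * c i)) (2 * c i)) with hS
  have hSfin : S.Finite := Set.Finite.pi fun i => (Set.finite_Icc _ _).image _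
  apply Set.Finite.subset ((hSfin.preimage (hΦinj.injOn)))
  intro β hβ
  simp only [Set.mem_setOf_eq] at hβ
  simp only [Set.mem_preimage, hS, Set.mem_pi, Set.mem_univ, forall_true_left, Set.mem_image,
    Set.mem_Icc]
  intro i
  -- key computation: testing α = β + t • (single i 1)
  have key : ∀ t : ℤ, t ≠ 0 → intVecCast (β + t • Pi.single i 1) ≠ -lam →
      (-(t : ℚ)) * ((z β i : ℚ) + (t : ℚ) * (c i) + (d i)) < 0 := by
    intro t ht hne
    have hαβ : β + t • Pi.single i 1 ≠ β := by
      intro h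
      have : (t • Pi.single i 1 : Fin l → ℤ) = 0 := by
        have := congrArg (fun v => v - β) h
        simpa [add_sub_cancel_left] using this
      have := congrFun this i
      simp at this
      tauto
    have h1 := hβ _ hαβ hne
    rw [intVecCast_add, intVecCast_zsmul, hecast i] at h1
    have hcast : intVecCast β - (intVecCast β + (t : ℚ) • e i) = -((t:ℚ) • e i) := by ring
    rw [hcast] at h1
    rw [map_neg, map_smul, LinearMap.neg_apply, LinearMap.smul_apply] at h1
    rw [map_add, map_add, map_smul] at h1
    rw [hz' β i, hd' i] at h1
    have hcc : B (e i) (e i) = (c i : ℚ) := by rw [← hecast i]; exact hc i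
    rw [hcc] at h1
    simp only [smul_eq_mul] at h1
    nlinarith [h1]
  -- upper bound
  have hub : (z β i : ℚ) + (d i) < 2 * (c i) := by
    by_cases h1 : intVecCast (β + (-1 : ℤ) • Pi.single i 1) ≠ -lam
    · have := key (-1) (by norm_num) h1
      push_cast at this
      nlinarith [hcpos i]
    · push_neg at h1
      have h2 : intVecCast (β + (-2 : ℤ) • Pi.single i 1) ≠ -lam := by
        intro h2
        have : intVecCast (β + (-1 : ℤ) • Pi.single i 1)
            - intVecCast (β + (-2 : ℤ) • Pi.single i 1) = 0 := by
          rw [h1, h2]; ring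
        rw [intVecCast_add, intVecCast_add, intVecCast_zsmul, intVecCast_zsmul, hecast i] at this
        have h3 : e i = 0 := by
          funext j
          have h4 := congrFun this j
          simp only [Pi.sub_apply, Pi.add_apply, Pi.smul_apply, smul_eq_mul,
            Pi.zero_apply] at h4 ⊢
          push_cast at h4
          linarith
        exact he_ne i h3
      have := key (-2) (by norm_num) h2
      push_cast at this
      nlinarith
  -- lower bound
  have hlb : -(2 * (c i)) < (z β i : ℚ) + (d i) := by
    by_cases h1 : intVecCast (β + (1 : ℤ) • Pi.single i 1) ≠ -lam
    · have := key 1 (by norm_num) h1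
      push_cast at this
      nlinarith [hcpos i]
    · push_neg at h1
      have h2 : intVecCast (β + (2 : ℤ) • Pi.single i 1) ≠ -lam := by
        intro h2
        have : intVecCast (β + (2 : ℤ) • Pi.single i 1)
            - intVecCast (β + (1 : ℤ) • Pi.single i 1) = 0 := by
          rw [h1, h2]; ring
        rw [intVecCast_add, intVecCast_add, intVecCast_zsmul, intVecCast_zsmul, hecast i] at this
        have h3 : e i = 0 := by
          funext j
          have h4 := congrFun this j
          simp only [Pi.sub_apply, Pi.add_apply, Pi.smul_apply, smul_eq_mul,
            Pi.zero_apply] at h4 ⊢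
          push_cast at h4
          linarith
        exact he_ne i h3
      have := key 2 (by norm_num) h2
      push_cast at this
      nlinarith
  refine ⟨z β i + d i, ⟨?_, ?_⟩, ?_⟩
  · have : -(2 * (c i) : ℚ) ≤ ((z β i + d i : ℤ) : ℚ) := by push_cast; linarith
    exact_mod_cast this
  · have : ((z β i + d i : ℤ) : ℚ) ≤ 2 * (c i) := by push_cast; linarith
    exact_mod_cast this
  · simp only [hΦ]
    rw [hz' β i, hd' i]
    push_cast
    ring
end

section
/- Let A be a finite-dimensional ℝ-inner product space, L ⊂ A a full-rank lattice, and λ ∈ A. Then the set of γ ∈ λ + L such that ⟨δ | γ − δ⟩ < 0 for every δ ∈ L with δ ≠ 0 and δ ≠ γ is finite. -/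
open scoped RealInnerProductSpace

private theorem lattice_inter_ball_finite (A : Type*) [NormedAddCommGroup A]
    [InnerProductSpace ℝ A] [FiniteDimensional ℝ A]
    (n : ℕ) (b : Module.Basis (Fin n) ℝ A) (r : ℝ) :
    (((Submodule.span ℤ (Set.range ⇑b)) : Set A) ∩ Metric.closedBall 0 r).Finite := by
  have hd : DiscreteTopology (Submodule.span ℤ (Set.range ⇑b)) := inferInstance
  have hc : IsClosed ((Submodule.span ℤ (Set.range ⇑b)) : Set A) := by
    have : DiscreteTopology (Submodule.span ℤ (Set.range ⇑b)).toAddSubgroup := inferInstance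
    exact AddSubgroup.isClosed_of_discrete (H := (Submodule.span ℤ (Set.range ⇑b)).toAddSubgroup)
  have hK : IsCompact (((Submodule.span ℤ (Set.range ⇑b)) : Set A) ∩ Metric.closedBall 0 r) :=
    (isCompact_closedBall 0 r).inter_left hc
  exact hK.finite (isDiscrete_iff_discreteTopology.mpr (DiscreteTopology.of_subset hd Set.inter_subset_left))

private theorem norm_bound_of_inner_bounds (A : Type*) [NormedAddCommGroup A]
    [InnerProductSpace ℝ A] [FiniteDimensional ℝ A]
    (n : ℕ) (b : Module.Basis (Fin n) ℝ A) :
    ∃ R : ℝ, ∀ γ : A, (∀ i, |⟪b i, γ⟫| ≤ ‖b i‖ ^ 2) → ‖γ‖ ≤ R := by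
  classical
  set T : A →ₗ[ℝ] (Fin n → ℝ) := LinearMap.pi (fun i => (innerSL ℝ (b i)).toLinearMap) with hT
  have hinj : Function.Injective T := by
    rw [← LinearMap.ker_eq_bot, Submodule.eq_bot_iff]
    intro x hx
    have hx' : ∀ i, ⟪b i, x⟫ = 0 := fun i => congrFun (hx : T x = 0) i
    have hall : ∀ v ∈ Submodule.span ℝ (Set.range ⇑b), ⟪v, x⟫ = 0 := by
      intro v hv
      induction hv using Submodule.span_induction with
      | mem v hv => obtain ⟨i, rfl⟩ := hv; exact hx' i
      | zero => simp
      | add v w _ _ hv hw => simp [inner_add_left, hv, hw]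
      | smul c v _ hv => simp [inner_smul_left, hv]
    have := hall x (by rw [b.span_eq]; trivial)
    exact inner_self_eq_zero.mp this
  have hfr : Module.finrank ℝ A = Module.finrank ℝ (Fin n → ℝ) := by
    simp [Module.finrank_eq_card_basis b]
  let e : A ≃ₗ[ℝ] (Fin n → ℝ) := T.linearEquivOfInjective hinj hfr
  let e' : A ≃L[ℝ] (Fin n → ℝ) := e.toContinuousLinearEquiv
  set C : ℝ := ∑ i, ‖b i‖ ^ 2 with hC
  have hC0 : 0 ≤ C := Finset.sum_nonneg fun i _ => sq_nonneg _
  refine ⟨‖(e'.symm : (Fin n → ℝ) →L[ℝ] A)‖ * C, fun γ hγ => ?_⟩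
  have h1 : ‖T γ‖ ≤ C := by
    rw [pi_norm_le_iff_of_nonneg hC0]
    intro i
    calc ‖T γ i‖ = |⟪b i, γ⟫| := rfl
      _ ≤ ‖b i‖ ^ 2 := hγ i
      _ ≤ C := Finset.single_le_sum (f := fun i => ‖b i‖^2)
            (fun j _ => sq_nonneg _) (Finset.mem_univ i)
  calc ‖γ‖ = ‖e'.symm (e' γ)‖ := by rw [e'.symm_apply_apply]
    _ ≤ ‖(e'.symm : (Fin n → ℝ) →L[ℝ] A)‖ * ‖e' γ‖ :=
        (e'.symm : (Fin n → ℝ) →L[ℝ] A).le_opNorm _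
    _ ≤ _ := by
        have he : e' γ = T γ := rfl
        rw [he]
        exact mul_le_mul_of_nonneg_left h1 (norm_nonneg _)

/-- For a full-rank lattice `L` in a finite-dimensional real inner
product space `A` and `λ ∈ A`, the set of `γ ∈ λ + L` with `⟪δ, γ − δ⟫ < 0` for
every `δ ∈ L`, `δ ≠ 0`, `δ ≠ γ`, is finite. -/
theorem translated_gamma_finite (A : Type*) [NormedAddCommGroup A]
    [InnerProductSpace ℝ A] [FiniteDimensional ℝ A]
    (n : ℕ) (b : Module.Basis (Fin n) ℝ A) (lam : A) :
    Set.Finite {γ : A |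
      γ - lam ∈ Submodule.span ℤ (Set.range ⇑b) ∧
      ∀ δ : A, δ ∈ Submodule.span ℤ (Set.range ⇑b) → δ ≠ 0 → δ ≠ γ →
        ⟪δ, γ - δ⟫ < 0} := by
  classical
  obtain ⟨R, hR⟩ := norm_bound_of_inner_bounds A n b
  set S := {γ : A |
      γ - lam ∈ Submodule.span ℤ (Set.range ⇑b) ∧
      ∀ δ : A, δ ∈ Submodule.span ℤ (Set.range ⇑b) → δ ≠ 0 → δ ≠ γ →
        ⟪δ, γ - δ⟫ < 0} with hS
  -- every γ in S satisfies the inner product bounds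
  have hbound : ∀ γ ∈ S, ‖γ‖ ≤ R := by
    intro γ hγ
    refine hR γ fun i => ?_
    have hbi : (b i) ∈ Submodule.span ℤ (Set.range ⇑b) :=
      Submodule.subset_span (Set.mem_range_self i)
    have hbne : (b i) ≠ 0 := b.ne_zero i
    rw [abs_le]
    constructor
    · by_cases hcase : γ = -b i
      · rw [hcase]
        rw [inner_neg_right, real_inner_self_eq_norm_sq]
      · have hmem : -(b i) ∈ Submodule.span ℤ (Set.range ⇑b) := neg_mem hbi
        have h := hγ.2 (-(b i)) hmem (neg_ne_zero.mpr hbne) (fun h => hcase h.symm)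
        rw [inner_sub_right, inner_neg_left, inner_neg_right, inner_neg_left,
          neg_neg, real_inner_self_eq_norm_sq] at h
        linarith
    · by_cases hcase : γ = b i
      · rw [hcase, real_inner_self_eq_norm_sq]
      · have h := hγ.2 (b i) hbi hbne (fun h => hcase h.symm)
        rw [inner_sub_right, real_inner_self_eq_norm_sq] at h
        linarith
  -- S - lam lies in the lattice intersected with a ball
  have hfin := lattice_inter_ball_finite A n b (R + ‖lam‖)
  refine Set.Finite.of_finite_image (f := fun γ => γ - lam) (hfin.subset ?_) ?_
  · rintro x ⟨γ, hγ, rfl⟩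
    refine ⟨hγ.1, ?_⟩
    rw [Metric.mem_closedBall, dist_zero_right]
    calc ‖γ - lam‖ ≤ ‖γ‖ + ‖lam‖ := norm_sub_le _ _
      _ ≤ R + ‖lam‖ := add_le_add_left (hbound γ hγ) _
  · exact fun x _ y _ h => by simpa using sub_left_injective h
end
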